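/- Let V > 0, r_d > 0, k > V/r_d, and let r, θ : ℝ → ℝ be differentiable functions satisfying for all t ≥ t̄: r(t) ≥ r_d, θ(t) ∈ [0, π/2], r'(t) = −V·cos θ(t), and θ'(t) = k·sign(cos θ(t) − √(1 − (r_d/r(t))²)) + V·sin θ(t)/r(t). Then r(t) → r_d and θ(t) → π/2 as t → ∞. -/

import Mathlib

open Real Filter
set_option maxHeartbeats 1000000

lemma decay_bound (g g' : ℝ → ℝ) (a b c : ℝ) (hab : a ≤ b)
    (hg : ∀ t ∈ Set.Icc a b, HasDerivAt g (g' t) t)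
    (hle : ∀ t ∈ Set.Icc a b, g' t ≤ c) :
    g b ≤ g a + c * (b - a) := by
  set G : ℝ → ℝ := fun t => g t - c * t with hGdef
  have hGd : ∀ t ∈ Set.Icc a b, HasDerivAt G (g' t - c) t := by
    intro t ht
    have : HasDerivAt (fun x : ℝ => c * x) c t := by
      simpa using (hasDerivAt_id t).const_mul c
    exact (hg t ht).sub this
  have hanti : AntitoneOn G (Set.Icc a b) := by
    apply antitoneOn_of_deriv_nonpos (convex_Icc a b)
    · exact fun t ht => (hGd t ht).continuousAt.continuousWithinAt
    · intro t ht
      rw [interior_Icc] at ht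
      exact ((hGd t (Set.Ioo_subset_Icc_self ht)).differentiableAt).differentiableWithinAt
    · intro t ht
      rw [interior_Icc] at ht
      rw [(hGd t (Set.Ioo_subset_Icc_self ht)).deriv]
      have := hle t (Set.Ioo_subset_Icc_self ht)
      linarith
  have := hanti (Set.left_mem_Icc.2 hab) (Set.right_mem_Icc.2 hab) hab
  simp only [hGdef] at this
  linarith

lemma abs_real_sign (x : ℝ) : |Real.sign x| ≤ 1 := by
  rcases lt_trichotomy x 0 with h | h | h
  · rw [Real.sign_of_neg h]; norm_num
  · rw [h, Real.sign_zero]; norm_num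
  · rw [Real.sign_of_pos h]; norm_num

theorem saturated_law_convergence
    (V r_d k tbar : ℝ) (r θ : ℝ → ℝ)
    (hV : 0 < V) (hrd : 0 < r_d) (hk : V / r_d < k)
    (hr : ∀ t, tbar ≤ t → r_d ≤ r t)
    (hθrange : ∀ t, tbar ≤ t → θ t ∈ Set.Icc 0 (π / 2))
    (hr' : ∀ t, tbar ≤ t → HasDerivAt r (-V * Real.cos (θ t)) t)
    (hθ' : ∀ t, tbar ≤ t → HasDerivAt θ
      (k * Real.sign (Real.cos (θ t) - Real.sqrt (1 - (r_d / r t) ^ 2))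
        + V * Real.sin (θ t) / r t) t) :
    Tendsto r atTop (nhds r_d) ∧ Tendsto θ atTop (nhds (π / 2)) := by
  set Φ : ℝ → ℝ := fun t =>
    k * Real.sign (Real.cos (θ t) - Real.sqrt (1 - (r_d / r t) ^ 2))
      + V * Real.sin (θ t) / r t with hΦdef
  have hk0 : 0 < k := lt_trans (div_pos hV hrd) hk
  set K := k + V / r_d with hKdef
  have hKpos : 0 < K := by positivity
  -- basic facts about θ
  have hrpos : ∀ t, tbar ≤ t → 0 < r t := fun t ht => lt_of_lt_of_le hrd (hr t ht)
  have hcosnn : ∀ t, tbar ≤ t → 0 ≤ Real.cos (θ t) := by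
    intro t ht
    obtain ⟨h0, h1⟩ := hθrange t ht
    exact Real.cos_nonneg_of_mem_Icc ⟨by linarith [pi_pos], h1⟩
  have hsin01 : ∀ t, tbar ≤ t → Real.sin (θ t) ∈ Set.Icc (0:ℝ) 1 := by
    intro t ht
    obtain ⟨h0, h1⟩ := hθrange t ht
    exact ⟨Real.sin_nonneg_of_nonneg_of_le_pi h0 (by linarith [pi_pos]), Real.sin_le_one _⟩
  -- bound on the fraction term
  have hfrac : ∀ t, tbar ≤ t → V * Real.sin (θ t) / r t ∈ Set.Icc (0:ℝ) (V / r_d) := by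
    intro t ht
    obtain ⟨hs0, hs1⟩ := hsin01 t ht
    constructor
    · exact div_nonneg (mul_nonneg hV.le hs0) (hrpos t ht).le
    · apply div_le_div₀ hV.le _ hrd (hr t ht)
      nlinarith
  -- bound on Φ
  have hΦbound : ∀ t, tbar ≤ t → |Φ t| ≤ K := by
    intro t ht
    obtain ⟨hf0, hf1⟩ := hfrac t ht
    have h1 : |k * Real.sign (Real.cos (θ t) - Real.sqrt (1 - (r_d / r t) ^ 2))| ≤ k := by
      rw [abs_mul, abs_of_pos hk0]
      nlinarith [abs_real_sign (Real.cos (θ t) - Real.sqrt (1 - (r_d / r t) ^ 2))]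
    calc |Φ t| ≤ _ + _ := abs_add_le _ _
      _ ≤ K := by rw [hKdef]; rw [abs_of_nonneg hf0]; linarith
  -- r is antitone on [tbar, ∞)
  have hmono : ∀ a b, tbar ≤ a → a ≤ b → r b ≤ r a := by
    intro a b ha hab
    have := decay_bound r (fun t => -V * Real.cos (θ t)) a b 0 hab
      (fun t ht => hr' t (le_trans ha ht.1))
      (fun t ht => by
        show -V * Real.cos (θ t) ≤ 0
        nlinarith [hcosnn t (le_trans ha ht.1)])
    linarith
  -- the limit L
  set f : ℝ → ℝ := fun t => r (max t tbar) with hfdef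
  have hfanti : Antitone f := by
    intro s t hst
    exact hmono _ _ (le_max_right _ _) (max_le_max hst le_rfl)
  have hbdd : BddBelow (Set.range f) := by
    refine ⟨r_d, ?_⟩
    rintro x ⟨t, rfl⟩
    exact hr _ (le_max_right _ _)
  set L := ⨅ t, f t with hLdef
  have hfL : Tendsto f atTop (nhds L) := tendsto_atTop_ciInf hfanti hbdd
  have hrf : r =ᶠ[atTop] f := by
    filter_upwards [eventually_ge_atTop tbar] with t ht
    simp [hfdef, max_eq_left ht]
  have hrL : Tendsto r atTop (nhds L) := hfL.congr' hrf.symm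
  have hLlb : ∀ t, tbar ≤ t → L ≤ r t := by
    intro t ht
    have := ciInf_le hbdd t
    simpa [hfdef, max_eq_left ht] using this
  have hLrd : r_d ≤ L := le_ciInf fun t => hr _ (le_max_right _ _)
  -- Lipschitz-type lower bound for cos (θ ·)
  have hcoslip : ∀ a b, tbar ≤ a → a ≤ b →
      Real.cos (θ a) - K * (b - a) ≤ Real.cos (θ b) := by
    intro a b ha hab
    have := decay_bound (fun t => -Real.cos (θ t)) (fun t => Real.sin (θ t) * Φ t) a b K hab
      (fun t ht => by
        have h := (Real.hasDerivAt_cos (θ t)).comp t (hθ' t (le_trans ha ht.1))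
        have := h.neg
        simpa [hΦdef, mul_comm, Function.comp_def, Pi.neg_def] using this)
      (fun t ht => by
        have htb := le_trans ha ht.1
        obtain ⟨hs0, hs1⟩ := hsin01 t htb
        have hb := hΦbound t htb
        have : Real.sin (θ t) * Φ t ≤ |Φ t| := by
          calc Real.sin (θ t) * Φ t ≤ |Real.sin (θ t) * Φ t| := le_abs_self _
            _ = Real.sin (θ t) * |Φ t| := by rw [abs_mul, abs_of_nonneg hs0]
            _ ≤ |Φ t| := by nlinarith [abs_nonneg (Φ t)]
        show Real.sin (θ t) * Φ t ≤ K
        linarith)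
    linarith
  -- cos (θ t) → 0
  have hcos0 : Tendsto (fun t => Real.cos (θ t)) atTop (nhds 0) := by
    rw [Metric.tendsto_atTop]
    intro ε hε
    set e := ε / 3 with hedef
    have he : 0 < e := by positivity
    set δ := e / K with hδdef
    have hδ : 0 < δ := by positivity
    have hB : 0 < V * e * δ := by positivity
    obtain ⟨T₀, hT₀⟩ := (Filter.eventually_atTop).1
      ((tendsto_order.1 hrL).2 (L + V * e * δ) (by linarith))
    refine ⟨max T₀ tbar, ?_⟩
    intro t ht
    have htb : tbar ≤ t := le_trans (le_max_right _ _) ht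
    have htT₀ : T₀ ≤ t := le_trans (le_max_left _ _) ht
    have hlt : Real.cos (θ t) < 2 * e := by
      by_contra hcon
      push_neg at hcon
      have hstep : r (t + δ) ≤ r t + -(V * e) * (t + δ - t) := by
        apply decay_bound r (fun s => -V * Real.cos (θ s)) t (t + δ) (-(V * e))
          (by linarith)
          (fun s hs => hr' s (le_trans htb hs.1))
        intro s hs
        have hcs : e ≤ Real.cos (θ s) := by
          have := hcoslip t s htb hs.1
          have hKle : K * (s - t) ≤ K * δ := by
            apply mul_le_mul_of_nonneg_left _ hKpos.le
            linarith [hs.2]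
          have hKδ : K * δ = e := by
            rw [hδdef]; field_simp
          linarith
        nlinarith
      have h1 : r t < L + V * e * δ := hT₀ t htT₀
      have h2 : L ≤ r (t + δ) := hLlb _ (by linarith)
      have : r (t + δ) ≤ r t - V * e * δ := by nlinarith
      linarith
    rw [Real.dist_eq, sub_zero, abs_of_nonneg (hcosnn t htb)]
    linarith
  -- θ → π/2
  have hθlim : Tendsto θ atTop (nhds (π / 2)) := by
    rw [Metric.tendsto_atTop]
    intro ε hε
    have hπ := pi_pos
    obtain ⟨φ, hφ0, hφlt, hφε⟩ :
        ∃ φ : ℝ, 0 ≤ φ ∧ φ < π / 2 ∧ π / 2 - φ ≤ ε / 2 := by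
      refine ⟨π / 2 - min (ε / 2) (π / 4), ?_, ?_, ?_⟩
      · have : min (ε / 2) (π / 4) ≤ π / 4 := min_le_right _ _
        linarith
      · have : 0 < min (ε / 2) (π / 4) := lt_min (by linarith) (by linarith)
        linarith
      · have : min (ε / 2) (π / 4) ≤ ε / 2 := min_le_left _ _
        linarith
    have hcosφ : 0 < Real.cos φ :=
      Real.cos_pos_of_mem_Ioo ⟨by linarith, hφlt⟩
    obtain ⟨T₀, hT₀⟩ := (Filter.eventually_atTop).1
      ((tendsto_order.1 hcos0).2 (Real.cos φ) hcosφ)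
    refine ⟨max T₀ tbar, ?_⟩
    intro t ht
    have htb : tbar ≤ t := le_trans (le_max_right _ _) ht
    obtain ⟨h0, h1⟩ := hθrange t htb
    have hφθ : φ < θ t := by
      by_contra hcon
      push_neg at hcon
      have h2 : Real.cos φ ≤ Real.cos (θ t) := Real.strictAntiOn_cos.antitoneOn
        ⟨h0, by linarith⟩ ⟨hφ0, by linarith⟩ hcon
      have := hT₀ t (le_trans (le_max_left _ _) ht)
      linarith
    rw [Real.dist_eq, abs_of_nonpos (by linarith)]
    linarith
  -- L = r_d
  have hLeq : L = r_d := by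
    by_contra hne
    have hlt : r_d < L := lt_of_le_of_ne hLrd (Ne.symm hne)
    have hL0 : 0 < L := lt_trans hrd hlt
    set c := Real.sqrt (1 - (r_d / L) ^ 2) with hcdef
    have hratio : r_d / L < 1 := (div_lt_one hL0).2 hlt
    have hratio0 : 0 < r_d / L := div_pos hrd hL0
    have hc : 0 < c := by
      rw [hcdef]
      apply Real.sqrt_pos.2
      nlinarith
    obtain ⟨T₀, hT₀⟩ := (Filter.eventually_atTop).1
      ((tendsto_order.1 hcos0).2 c hc)
    set T := max T₀ tbar with hTdef
    have hTb : tbar ≤ T := le_max_right _ _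
    set m := k - V / r_d with hmdef
    have hm : 0 < m := by rw [hmdef]; linarith
    have hθT0 : 0 ≤ θ T := (hθrange T hTb).1
    set t₁ := T + (θ T + 1) / m with ht₁def
    have ht₁T : T ≤ t₁ := by
      rw [ht₁def]
      have : 0 < (θ T + 1) / m := by positivity
      linarith
    have hstep : θ t₁ ≤ θ T + -m * (t₁ - T) := by
      apply decay_bound θ Φ T t₁ (-m) ht₁T
        (fun s hs => hθ' s (le_trans hTb hs.1))
      intro s hs
      have hsb : tbar ≤ s := le_trans hTb hs.1
      have hsT₀ : T₀ ≤ s := le_trans (le_max_left _ _) hs.1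
      have hcs : Real.cos (θ s) < c := hT₀ s hsT₀
      have hrsL : L ≤ r s := hLlb s hsb
      have hsqrt : c ≤ Real.sqrt (1 - (r_d / r s) ^ 2) := by
        rw [hcdef]
        apply Real.sqrt_le_sqrt
        have h1 : r_d / r s ≤ r_d / L := by
          apply div_le_div_of_nonneg_left hrd.le hL0 hrsL
        have h2 : 0 ≤ r_d / r s := le_of_lt (div_pos hrd (hrpos s hsb))
        nlinarith
      have hneg : Real.cos (θ s) - Real.sqrt (1 - (r_d / r s) ^ 2) < 0 := by
        linarith
      have hsign : Real.sign (Real.cos (θ s) - Real.sqrt (1 - (r_d / r s) ^ 2)) = -1 :=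
        Real.sign_of_neg hneg
      have hfr := (hfrac s hsb).2
      simp only [hΦdef, hsign]
      rw [hmdef]
      linarith
    have hbad : θ t₁ ≤ -1 := by
      have hmt : m * (t₁ - T) = θ T + 1 := by
        rw [ht₁def]
        field_simp
        ring
      nlinarith [hstep, hmt]
    have := (hθrange t₁ (le_trans hTb ht₁T)).1
    linarith
  rw [hLeq] at hrL
  exact ⟨hrL, hθlim⟩
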